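/- Fix d ≥ 2, 0 < p⋆ ≤ 1/(2(d+1)), and η₁, η₂ ∈ Δ_d, and let P₁, P₂ be the laws of a length-m trajectory under (M_{η₁}, p) and (M_{η₂}, p) respectively. Let N_{d+1}(x) = ∑_{t=1}^m 1{x_t = d+1}. Then for every n ∈ ℕ with m + 1 ≥ 2n, the total variation distance between the conditional distributions of the trajectory given N_{d+1} ≤ n satisfies: TV( P₁(· | N_{d+1} ≤ n), P₂(· | N_{d+1} ≤ n) ) ≤ TV( P₁(· | N_{d+1} = n), P₂(· | N_{d+1} = n) ). -/

import Mathlib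

open Finset

noncomputable section

/-- A row-stochastic matrix. -/
def IsStochastic {d : ℕ} (M : Matrix (Fin d) (Fin d) ℝ) : Prop :=
  (∀ i j, 0 ≤ M i j) ∧ ∀ i, ∑ j, M i j = 1

/-- A probability distribution on `Fin d`. -/
def IsDist {d : ℕ} (μ : Fin d → ℝ) : Prop :=
  (∀ i, 0 ≤ μ i) ∧ ∑ i, μ i = 1

/-- Probability of a length-`m` trajectory under the Markov chain `(M, μ)`:
`μ(x₁) ∏_{t=1}^{m-1} M(x_t, x_{t+1})`. -/
def trajP {d m : ℕ} (M : Matrix (Fin d) (Fin d) ℝ) (μ : Fin d → ℝ)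
    (x : Fin m → Fin d) : ℝ :=
  (if h : 0 < m then μ (x ⟨0, h⟩) else 1) *
    ∏ t : Fin (m - 1),
      M (x ⟨t.1, by have h2 := t.2; omega⟩) (x ⟨t.1 + 1, by have h2 := t.2; omega⟩)


/-- The distribution `p` on `[d+1]`: `p(d+1) = p⋆`, `p(i) = (1-p⋆)/d` for `i ∈ [d]`. -/
def pInit (d : ℕ) (ps : ℝ) : Fin (d + 1) → ℝ :=
  fun i => if i.1 = d then ps else (1 - ps) / d

/-- The chain `M_η ∈ G_{p⋆}`: rows `1,…,d` equal `p`, row `d+1` is `(η(1),…,η(d),0)`. -/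
def MG (d : ℕ) (ps : ℝ) (η : Fin d → ℝ) : Matrix (Fin (d + 1)) (Fin (d + 1)) ℝ :=
  Matrix.of fun i j =>
    if i.1 = d then (if h : j.1 = d then 0 else η ⟨j.1, by have h2 := j.2; omega⟩)
    else pInit d ps j

/-- Number of visits to state `d+1` in a trajectory. -/
def Nlast (d m : ℕ) (x : Fin m → Fin (d + 1)) : ℕ :=
  (Finset.univ.filter (fun t => (x t).1 = d)).card

open scoped Classical in
/-- The conditional distribution of a length-`m` trajectory of `(M_η, p)` given the
event `E` (with the convention `0/0 = 0`). -/
def condP {d m : ℕ} (ps : ℝ) (η : Fin d → ℝ)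
    (E : (Fin m → Fin (d + 1)) → Prop) (x : Fin m → Fin (d + 1)) : ℝ :=
  (if E x then trajP (MG d ps η) (pInit d ps) x else 0) /
    ∑ y, if E y then trajP (MG d ps η) (pInit d ps) y else 0

/-- Total variation distance between two distributions on a finite set. -/
def tvDist {S : Type*} [Fintype S] (P Q : S → ℝ) : ℝ := (1 / 2) * ∑ x, |P x - Q x|

/-- The `n`-fold product distribution `η^{⊗n}` on `[d]^n`. -/
def prodP {d : ℕ} (η : Fin d → ℝ) (n : ℕ) (x : Fin n → Fin d) : ℝ := ∏ s, η (x s)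

----------------------------------------------------------------
-- auxiliary development
----------------------------------------------------------------
open scoped Classical

theorem sum_pi_succ {α : Type*} [Fintype α] (k : ℕ) (F : (Fin (k+1) → α) → ℝ) :
    ∑ y : Fin (k+1) → α, F y = ∑ b : α, ∑ z : Fin k → α, F (Fin.cons b z) := by
  calc ∑ y : Fin (k+1) → α, F y
      = ∑ p : α × (Fin k → α), F (Fin.cons p.1 p.2) :=
        (Fintype.sum_equiv (Fin.consEquiv (fun _ => α)) _ _ (fun p => rfl)).symm
    _ = ∑ b : α, ∑ z : Fin k → α, F (Fin.cons b z) :=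
        Fintype.sum_prod_type (f := fun p : α × (Fin k → α) => F (Fin.cons p.1 p.2))

/-- path weight from current state `a` over the next `k` steps. -/
def Wf (d : ℕ) (ps : ℝ) (η : Fin d → ℝ) : (k : ℕ) → Fin (d+1) → (Fin k → Fin (d+1)) → ℝ
  | 0, _, _ => 1
  | k+1, a, y => MG d ps η a (y 0) * Wf d ps η k (y 0) (fun t => y t.succ)

def wB (ps : ℝ) : Bool → ℕ → (ℕ → Prop) → ℕ → ℝ
  | _, 0, c, j => if c 0 ∧ j = 0 then 1 else 0
  | true, _+1, _, 0 => 0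
  | true, k+1, c, j+1 => wB ps false k c j
  | false, k+1, c, j => (1 - ps) * wB ps false k c j + ps * wB ps true k (fun i => c (i+1)) j

lemma Wf_cons (d k : ℕ) (ps : ℝ) (η : Fin d → ℝ) (a b : Fin (d+1)) (z : Fin k → Fin (d+1)) :
    Wf d ps η (k+1) a (Fin.cons b z) = MG d ps η a b * Wf d ps η k b z := by
  have h : (fun t : Fin k => Fin.cons (α := fun _ => Fin (d+1)) b z t.succ) = z := by
    funext t; rw [Fin.cons_succ]
  simp [Wf, h]

lemma Nlast_cons (d k : ℕ) (b : Fin (d+1)) (z : Fin k → Fin (d+1)) :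
    Nlast d (k+1) (Fin.cons b z) = Nlast d k z + (if b.1 = d then 1 else 0) := by
  unfold Nlast
  rw [Finset.card_filter, Finset.card_filter, Fin.sum_univ_succ]
  simp [Fin.cons_zero, Fin.cons_succ, add_comm]

lemma Nlast_zero (d : ℕ) (z : Fin 0 → Fin (d+1)) : Nlast d 0 z = 0 := by
  simp [Nlast]

lemma pInit_nonneg (d : ℕ) (ps : ℝ) (h0 : 0 ≤ ps) (h1 : ps ≤ 1) (b : Fin (d+1)) :
    0 ≤ pInit d ps b := by
  unfold pInit; split_ifs
  · exact h0
  · apply div_nonneg (by linarith) (by positivity)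

lemma MG_nonneg (d : ℕ) (ps : ℝ) (η : Fin d → ℝ) (h0 : 0 ≤ ps) (h1 : ps ≤ 1)
    (hη : ∀ i, 0 ≤ η i) (a b : Fin (d+1)) : 0 ≤ MG d ps η a b := by
  unfold MG
  simp only [Matrix.of_apply]
  split_ifs with h h'
  · exact le_rfl
  · exact hη _
  · exact pInit_nonneg d ps h0 h1 b

lemma MG_nonlast (d : ℕ) (ps : ℝ) (η : Fin d → ℝ) (a b : Fin (d+1)) (ha : ¬ a.1 = d) :
    MG d ps η a b = pInit d ps b := by
  simp [MG, ha]

lemma MG_last_last (d : ℕ) (ps : ℝ) (η : Fin d → ℝ) (a b : Fin (d+1))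
    (ha : a.1 = d) (hb : b.1 = d) : MG d ps η a b = 0 := by
  simp [MG, ha, hb]

lemma MG_last_cast (d : ℕ) (ps : ℝ) (η : Fin d → ℝ) (a : Fin (d+1)) (i : Fin d)
    (ha : a.1 = d) : MG d ps η a i.castSucc = η i := by
  have hi : ¬ ((i : ℕ) = d) := by have := i.2; omega
  simp [MG, ha, Fin.coe_castSucc, hi, Fin.eta]

lemma pInit_last (d : ℕ) (ps : ℝ) : pInit d ps (Fin.last d) = ps := by simp [pInit]

lemma pInit_cast (d : ℕ) (ps : ℝ) (i : Fin d) : pInit d ps i.castSucc = (1 - ps) / d := by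
  have hi : ¬ ((i : ℕ) = d) := by have := i.2; omega
  simp [pInit, Fin.coe_castSucc, hi]

lemma Wf_nonneg (d : ℕ) (ps : ℝ) (η : Fin d → ℝ) (h0 : 0 ≤ ps) (h1 : ps ≤ 1)
    (hη : ∀ i, 0 ≤ η i) : ∀ (k : ℕ) (a : Fin (d+1)) (y : Fin k → Fin (d+1)),
    0 ≤ Wf d ps η k a y := by
  intro k
  induction k with
  | zero => intro a y; simp [Wf]
  | succ k ih => intro a y
                 exact mul_nonneg (MG_nonneg d ps η h0 h1 hη _ _) (ih _ _)

lemma Wf_eq_prod (d : ℕ) (ps : ℝ) (η : Fin d → ℝ) :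
    ∀ (k : ℕ) (x : Fin (k+1) → Fin (d+1)),
    Wf d ps η k (x 0) (fun t => x t.succ) = ∏ t : Fin k, MG d ps η (x t.castSucc) (x t.succ) := by
  intro k
  induction k with
  | zero => intro x; simp [Wf]
  | succ k ih =>
      intro x
      rw [Fin.prod_univ_succ]
      have h1 : Wf d ps η (k+1) (x 0) (fun t => x t.succ)
          = MG d ps η (x 0) (x ((0 : Fin (k+1)).succ))
            * Wf d ps η k (x ((0 : Fin (k+1)).succ)) (fun t => x t.succ.succ) := rfl
      rw [h1, ih (fun t => x t.succ)]
      simp [Fin.succ_castSucc, -Fin.castSucc_succ]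

lemma trajP_eq (d m : ℕ) (hd0 : 0 < d) (ps : ℝ) (η : Fin d → ℝ) (x : Fin m → Fin (d+1)) :
    trajP (MG d ps η) (pInit d ps) x = Wf d ps η m ⟨0, Nat.succ_pos d⟩ x := by
  cases m with
  | zero => simp [trajP, Wf]
  | succ k =>
      have h0 : trajP (MG d ps η) (pInit d ps) x
          = pInit d ps (x 0) * ∏ t : Fin k, MG d ps η (x t.castSucc) (x t.succ) := by
        rw [trajP, dif_pos (Nat.succ_pos k)]
        congr 1
      rw [h0, ← Wf_eq_prod]
      have h2 : Wf d ps η (k+1) ⟨0, Nat.succ_pos d⟩ x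
          = MG d ps η ⟨0, Nat.succ_pos d⟩ (x 0) * Wf d ps η k (x 0) (fun t => x t.succ) := rfl
      rw [h2, MG_nonlast d ps η _ _ (by simp; omega)]

lemma wB_nonneg (ps : ℝ) (h0 : 0 ≤ ps) (h1 : ps ≤ 1) :
    ∀ (k : ℕ) (flag : Bool) (c : ℕ → Prop) (j : ℕ), 0 ≤ wB ps flag k c j := by
  intro k
  induction k with
  | zero => intro flag c j; simp only [wB]; split_ifs <;> norm_num
  | succ k ih =>
      intro flag c j
      match flag, j with
      | true, 0 => simp [wB]
      | true, j+1 => simpa [wB] using ih false c j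
      | false, j =>
          have := ih false c j
          have := ih true (fun i => c (i+1)) j
          simp only [wB]
          have hps' : 0 ≤ 1 - ps := by linarith
          positivity

lemma wB_congr (ps : ℝ) :
    ∀ (k : ℕ) (flag : Bool) (c c' : ℕ → Prop) (j : ℕ), (∀ i, c i ↔ c' i) →
      wB ps flag k c j = wB ps flag k c' j := by
  intro k
  induction k with
  | zero =>
      intro flag c c' j h
      simp only [wB]
      rw [if_congr (and_congr_left (fun _ => h 0)) rfl rfl]
  | succ k ih =>
      intro flag c c' j h
      match flag, j with
      | true, 0 => simp [wB]
      | true, j+1 => simpa [wB] using ih false c c' j h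
      | false, j =>
          simp only [wB]
          rw [ih false c c' j h, ih true (fun i => c (i+1)) (fun i => c' (i+1)) j (fun i => h (i+1))]

lemma wB_zero_of (ps : ℝ) :
    ∀ (k : ℕ) (flag : Bool) (c : ℕ → Prop) (j : ℕ), (∀ i, i ≤ k → ¬ c i) →
      wB ps flag k c j = 0 := by
  intro k
  induction k with
  | zero =>
      intro flag c j h
      simp only [wB]
      rw [if_neg]
      intro hc
      exact h 0 le_rfl hc.1
  | succ k ih =>
      intro flag c j h
      match flag, j with
      | true, 0 => simp [wB]
      | true, j+1 => simpa [wB] using ih false c j (fun i hi => h i (by omega))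
      | false, j =>
          simp only [wB]
          rw [ih false c j (fun i hi => h i (by omega)),
            ih true (fun i => c (i+1)) j (fun i hi => h (i+1) (by omega))]
          ring

lemma wB_vanish (ps : ℝ) :
    ∀ (k : ℕ) (c : ℕ → Prop) (j : ℕ),
      (k < j → wB ps true k c j = 0) ∧ (k ≤ j → 1 ≤ j → wB ps false k c j = 0) := by
  intro k
  induction k with
  | zero =>
      intro c j
      constructor <;> intro h <;> [skip; intro h1] <;>
        · simp only [wB]; rw [if_neg]; intro hc; omega
  | succ k ih =>
      intro c j
      constructor
      · intro h
        match j with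
        | j+1 =>
            show wB ps false k c j = 0
            exact (ih c j).2 (by omega) (by omega)
      · intro h h1
        simp only [wB]
        rw [(ih c j).2 (by omega) (by omega), (ih (fun i => c (i+1)) j).1 (by omega)]
        ring

lemma wB_le (ps : ℝ) :
    ∀ (k : ℕ) (flag : Bool) (c : ℕ → Prop) (j : ℕ), wB ps flag k c j ≠ 0 →
      ∃ i, c i ∧ j ≤ i + (if flag then 1 else 0) := by
  intro k
  induction k with
  | zero =>
      intro flag c j h
      simp only [wB] at h
      split_ifs at h with hc
      · exact ⟨0, hc.1, by omega⟩
      · exact absurd rfl h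
  | succ k ih =>
      intro flag c j h
      match flag, j with
      | true, 0 => simp [wB] at h
      | true, j+1 =>
          obtain ⟨i, hi, hij⟩ := ih false c j (by simpa [wB] using h)
          exact ⟨i, hi, by simp at hij ⊢; omega⟩
      | false, j =>
          simp only [wB] at h
          by_cases hA : wB ps false k c j = 0
          · have hB : wB ps true k (fun i => c (i+1)) j ≠ 0 := by
              intro hB; rw [hA, hB] at h; simp at h
            obtain ⟨i, hi, hij⟩ := ih true (fun i => c (i+1)) j hB
            exact ⟨i+1, hi, by simp at hij ⊢; omega⟩
          · obtain ⟨i, hi, hij⟩ := ih false c j hA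
            exact ⟨i, hi, by simp at hij ⊢; omega⟩

lemma wB_ge (ps : ℝ) :
    ∀ (k : ℕ) (flag : Bool) (c : ℕ → Prop) (j : ℕ), wB ps flag k c j ≠ 0 →
      ∃ i, c i ∧ i ≤ j + (if flag then 0 else 1) := by
  intro k
  induction k with
  | zero =>
      intro flag c j h
      simp only [wB] at h
      split_ifs at h with hc
      · exact ⟨0, hc.1, by omega⟩
      · exact absurd rfl h
  | succ k ih =>
      intro flag c j h
      match flag, j with
      | true, 0 => simp [wB] at h
      | true, j+1 =>
          obtain ⟨i, hi, hij⟩ := ih false c j (by simpa [wB] using h)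
          exact ⟨i, hi, by simp at hij ⊢; omega⟩
      | false, j =>
          simp only [wB] at h
          by_cases hA : wB ps false k c j = 0
          · have hB : wB ps true k (fun i => c (i+1)) j ≠ 0 := by
              intro hB; rw [hA, hB] at h; simp at h
            obtain ⟨i, hi, hij⟩ := ih true (fun i => c (i+1)) j hB
            exact ⟨i+1, hi, by simp at hij ⊢; omega⟩
          · obtain ⟨i, hi, hij⟩ := ih false c j hA
            exact ⟨i, hi, by simp at hij ⊢; omega⟩

lemma wB_decomp (ps : ℝ) :
    ∀ (k : ℕ) (flag : Bool) (c : ℕ → Prop) (j : ℕ),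
      wB ps flag k c j
        = ∑ r ∈ Finset.range (k+1), (if c r then 1 else 0) * wB ps flag k (fun i => i = r) j := by
  intro k
  induction k with
  | zero =>
      intro flag c j
      simp only [wB, Finset.sum_range_one]
      by_cases hc : c 0 <;> by_cases hj : j = 0 <;> simp [hc, hj]
  | succ k ih =>
      intro flag c j
      match flag, j with
      | true, 0 => simp [wB]
      | true, j+1 =>
          show wB ps false k c j = _
          rw [Finset.sum_range_succ (fun r => (if c r then (1:ℝ) else 0) * wB ps true (k+1) (fun i => i = r) (j+1)) (k+1)]
          have hz : wB ps true (k+1) (fun i => i = k+1) (j+1) = 0 :=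
            wB_zero_of ps k false _ j (fun i hi => by omega)
          rw [hz, mul_zero, add_zero, ih false c j]
          exact Finset.sum_congr rfl (fun r _ => rfl)
      | false, j =>
          simp only [wB]
          rw [ih false c j, ih true (fun i => c (i+1)) j]
          have hsplit : ∀ r, (if c r then (1:ℝ) else 0) *
              ((1 - ps) * wB ps false k (fun i => i = r) j
                + ps * wB ps true k (fun i => i + 1 = r) j)
              = (if c r then (1:ℝ) else 0) * ((1 - ps) * wB ps false k (fun i => i = r) j)
                + (if c r then (1:ℝ) else 0) * (ps * wB ps true k (fun i => i + 1 = r) j) := by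
            intro r; ring
          calc (1 - ps) * ∑ r ∈ Finset.range (k+1), (if c r then (1:ℝ) else 0) * wB ps false k (fun i => i = r) j
                + ps * ∑ r ∈ Finset.range (k+1), (if c (r+1) then (1:ℝ) else 0) * wB ps true k (fun i => i = r) j
              = (∑ r ∈ Finset.range (k+1), (if c r then (1:ℝ) else 0) * ((1 - ps) * wB ps false k (fun i => i = r) j))
                + ∑ r ∈ Finset.range (k+1), (if c (r+1) then (1:ℝ) else 0) * (ps * wB ps true k (fun i => i = r) j) := by
                rw [Finset.mul_sum, Finset.mul_sum]
                congr 1 <;> exact Finset.sum_congr rfl (fun r _ => by ring)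
            _ = (∑ r ∈ Finset.range (k+2), (if c r then (1:ℝ) else 0) * ((1 - ps) * wB ps false k (fun i => i = r) j))
                + ∑ r ∈ Finset.range (k+2), (if c r then (1:ℝ) else 0) * (ps * wB ps true k (fun i => i + 1 = r) j) := by
                congr 1
                · rw [Finset.sum_range_succ (fun r => (if c r then (1:ℝ) else 0) * ((1 - ps) * wB ps false k (fun i => i = r) j)) (k+1),
                    wB_zero_of ps k false (fun i => i = k+1) j (fun i hi => by omega)]
                  simp
                · rw [Finset.sum_range_succ' (fun r => (if c r then (1:ℝ) else 0) * (ps * wB ps true k (fun i => i + 1 = r) j)) (k+1)]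
                  rw [wB_zero_of ps k true (fun i => i + 1 = 0) j (fun i hi => by omega)]
                  simp only [mul_zero, add_zero]
                  exact Finset.sum_congr rfl (fun r _ => by
                    rw [wB_congr ps k true (fun i => i + 1 = r + 1) (fun i => i = r) j (fun i => by omega)])
            _ = ∑ r ∈ Finset.range (k+2), (if c r then (1:ℝ) else 0) *
                  ((1 - ps) * wB ps false k (fun i => i = r) j + ps * wB ps true k (fun i => i + 1 = r) j) := by
                rw [← Finset.sum_add_distrib]
                exact Finset.sum_congr rfl (fun r _ => (hsplit r).symm)

lemma main_ind (d : ℕ) (hd0 : 0 < d) (ps : ℝ) (hps0 : 0 ≤ ps) (hps1 : ps ≤ 1)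
    (η₁ η₂ : Fin d → ℝ) (h1 : ∀ i, 0 ≤ η₁ i) (h2 : ∀ i, 0 ≤ η₂ i)
    (Φ : ℝ → ℝ → ℝ) (hΦ : ∀ (l x y : ℝ), 0 ≤ l → Φ (l * x) (l * y) = l * Φ x y) :
    ∀ (k : ℕ) (a : Fin (d+1)) (c : ℕ → Prop) (α β : ℝ), 0 ≤ α → 0 ≤ β →
    (∑ y : Fin k → Fin (d+1),
       if c (Nlast d k y) then Φ (α * Wf d ps η₁ k a y) (β * Wf d ps η₂ k a y) else 0)
    = ∑ j ∈ Finset.range (k+1), wB ps (decide (a.1 = d)) k c j *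
        ∑ u : Fin j → Fin d, Φ (α * ∏ s, η₁ (u s)) (β * ∏ s, η₂ (u s)) := by
  have Φ00 : Φ 0 0 = 0 := by
    have := hΦ 0 0 0 le_rfl
    simpa using this
  intro k
  induction k with
  | zero =>
      intro a c α β hα hβ
      rw [Finset.sum_range_one]
      by_cases hc : c 0 <;> simp [Nlast_zero, Wf, wB, hc]
  | succ k ih =>
      intro a c α β hα hβ
      rw [sum_pi_succ (k := k) (fun y => if c (Nlast d (k+1) y) then
        Φ (α * Wf d ps η₁ (k+1) a y) (β * Wf d ps η₂ (k+1) a y) else 0)]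
      have hsummand : ∀ (b : Fin (d+1)) (z : Fin k → Fin (d+1)),
          (if c (Nlast d (k+1) (Fin.cons b z)) then
            Φ (α * Wf d ps η₁ (k+1) a (Fin.cons b z)) (β * Wf d ps η₂ (k+1) a (Fin.cons b z)) else 0)
          = if c (Nlast d k z + (if b.1 = d then 1 else 0)) then
              Φ (α * (MG d ps η₁ a b * Wf d ps η₁ k b z))
                (β * (MG d ps η₂ a b * Wf d ps η₂ k b z)) else 0 := by
        intro b z
        rw [Nlast_cons, Wf_cons, Wf_cons]
      simp only [hsummand]
      by_cases ha : a.1 = d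
      · -- current state is the last state
        rw [show decide (a.1 = d) = true from decide_eq_true ha]
        rw [Fin.sum_univ_castSucc (n := d)]
        have hlast : (∑ z : Fin k → Fin (d+1),
            if c (Nlast d k z + (if (Fin.last d).1 = d then 1 else 0)) then
              Φ (α * (MG d ps η₁ a (Fin.last d) * Wf d ps η₁ k (Fin.last d) z))
                (β * (MG d ps η₂ a (Fin.last d) * Wf d ps η₂ k (Fin.last d) z)) else 0) = 0 := by
          apply Finset.sum_eq_zero
          intro z _
          rw [MG_last_last d ps η₁ a _ ha (Fin.val_last d),
            MG_last_last d ps η₂ a _ ha (Fin.val_last d)]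
          simp [Φ00]
        rw [hlast, add_zero]
        have hcast : ∀ i : Fin d, (∑ z : Fin k → Fin (d+1),
            if c (Nlast d k z + (if (i.castSucc : Fin (d+1)).1 = d then 1 else 0)) then
              Φ (α * (MG d ps η₁ a i.castSucc * Wf d ps η₁ k i.castSucc z))
                (β * (MG d ps η₂ a i.castSucc * Wf d ps η₂ k i.castSucc z)) else 0)
            = ∑ j ∈ Finset.range (k+1), wB ps false k c j *
                ∑ u : Fin j → Fin d, Φ ((α * η₁ i) * ∏ s, η₁ (u s)) ((β * η₂ i) * ∏ s, η₂ (u s)) := by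
          intro i
          have hi : ¬ ((i.castSucc : Fin (d+1)).1 = d) := by
            have := i.2; simp only [Fin.coe_castSucc]; omega
          have hmg1 := MG_last_cast d ps η₁ a i ha
          have hmg2 := MG_last_cast d ps η₂ a i ha
          have hrw : ∀ z : Fin k → Fin (d+1),
              (if c (Nlast d k z + (if (i.castSucc : Fin (d+1)).1 = d then 1 else 0)) then
                Φ (α * (MG d ps η₁ a i.castSucc * Wf d ps η₁ k i.castSucc z))
                  (β * (MG d ps η₂ a i.castSucc * Wf d ps η₂ k i.castSucc z)) else 0)
              = if c (Nlast d k z) then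
                  Φ ((α * η₁ i) * Wf d ps η₁ k i.castSucc z)
                    ((β * η₂ i) * Wf d ps η₂ k i.castSucc z) else 0 := by
            intro z
            rw [hmg1, hmg2, if_neg hi, add_zero, ← mul_assoc, ← mul_assoc]
          simp only [hrw]
          have := ih i.castSucc c (α * η₁ i) (β * η₂ i)
            (mul_nonneg hα (h1 i)) (mul_nonneg hβ (h2 i))
          rw [this, show decide ((i.castSucc : Fin (d+1)).1 = d) = false from decide_eq_false hi]
        simp only [hcast]
        rw [Finset.sum_comm]
        rw [Finset.sum_range_succ' (fun j => wB ps true (k+1) c j *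
          ∑ u : Fin j → Fin d, Φ (α * ∏ s, η₁ (u s)) (β * ∏ s, η₂ (u s))) (k+1)]
        have h00 : wB ps true (k+1) c 0 *
            (∑ u : Fin 0 → Fin d, Φ (α * ∏ s, η₁ (u s)) (β * ∏ s, η₂ (u s))) = 0 := by
          simp [wB]
        rw [h00, add_zero]
        apply Finset.sum_congr rfl
        intro j _
        have hstep : ∀ b : Fin d,  wB ps false k c j *
              (∑ u : Fin j → Fin d, Φ ((α * η₁ b) * ∏ s, η₁ (u s)) ((β * η₂ b) * ∏ s, η₂ (u s)))
            = wB ps false k c j *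
              (∑ u : Fin j → Fin d, Φ (α * (η₁ b * ∏ s, η₁ (u s))) (β * (η₂ b * ∏ s, η₂ (u s)))) := by
          intro b
          congr 1
          exact Finset.sum_congr rfl (fun u _ => by rw [mul_assoc, mul_assoc])
        simp only [hstep]
        rw [← Finset.mul_sum]
        have hpi : (∑ b : Fin d, ∑ u : Fin j → Fin d,
              Φ (α * (η₁ b * ∏ s, η₁ (u s))) (β * (η₂ b * ∏ s, η₂ (u s))))
            = ∑ u : Fin (j+1) → Fin d, Φ (α * ∏ s, η₁ (u s)) (β * ∏ s, η₂ (u s)) := by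
          rw [sum_pi_succ (k := j) (fun u => Φ (α * ∏ s, η₁ (u s)) (β * ∏ s, η₂ (u s)))]
          apply Finset.sum_congr rfl
          intro b _
          apply Finset.sum_congr rfl
          intro u _
          rw [Fin.prod_univ_succ, Fin.prod_univ_succ]
          simp only [Fin.cons_zero, Fin.cons_succ]
        rw [hpi]
        rfl
      · -- current state is an ordinary state
        rw [show decide (a.1 = d) = false from decide_eq_false ha]
        have hrow : ∀ (b : Fin (d+1)) (z : Fin k → Fin (d+1)),
            (if c (Nlast d k z + (if b.1 = d then 1 else 0)) then
              Φ (α * (MG d ps η₁ a b * Wf d ps η₁ k b z))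
                (β * (MG d ps η₂ a b * Wf d ps η₂ k b z)) else 0)
            = pInit d ps b * (if c (Nlast d k z + (if b.1 = d then 1 else 0)) then
                Φ (α * Wf d ps η₁ k b z) (β * Wf d ps η₂ k b z) else 0) := by
          intro b z
          rw [MG_nonlast d ps η₁ a b ha, MG_nonlast d ps η₂ a b ha]
          rw [show α * (pInit d ps b * Wf d ps η₁ k b z)
              = pInit d ps b * (α * Wf d ps η₁ k b z) by ring,
            show β * (pInit d ps b * Wf d ps η₂ k b z)
              = pInit d ps b * (β * Wf d ps η₂ k b z) by ring]
          rw [hΦ _ _ _ (pInit_nonneg d ps hps0 hps1 b)]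
          rw [mul_ite, mul_zero]
        simp only [hrow]
        rw [Fin.sum_univ_castSucc (n := d)]
        have hcast2 : ∀ i : Fin d,
            (∑ z : Fin k → Fin (d+1), pInit d ps i.castSucc *
              (if c (Nlast d k z + (if (i.castSucc : Fin (d+1)).1 = d then 1 else 0)) then
                Φ (α * Wf d ps η₁ k i.castSucc z) (β * Wf d ps η₂ k i.castSucc z) else 0))
            = (1 - ps) / d * ∑ j ∈ Finset.range (k+1), wB ps false k c j *
                ∑ u : Fin j → Fin d, Φ (α * ∏ s, η₁ (u s)) (β * ∏ s, η₂ (u s)) := by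
          intro i
          have hi : ¬ ((i.castSucc : Fin (d+1)).1 = d) := by
            have := i.2; simp only [Fin.coe_castSucc]; omega
          rw [← Finset.mul_sum, pInit_cast]
          congr 1
          have hz : ∀ z : Fin k → Fin (d+1),
              (if c (Nlast d k z + (if (i.castSucc : Fin (d+1)).1 = d then 1 else 0)) then
                Φ (α * Wf d ps η₁ k i.castSucc z) (β * Wf d ps η₂ k i.castSucc z) else 0)
              = (if c (Nlast d k z) then
                Φ (α * Wf d ps η₁ k i.castSucc z) (β * Wf d ps η₂ k i.castSucc z) else 0) := by
            intro z; rw [if_neg hi, add_zero]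
          simp only [hz]
          rw [ih i.castSucc c α β hα hβ,
            show decide ((i.castSucc : Fin (d+1)).1 = d) = false from decide_eq_false hi]
        have hlast2 :
            (∑ z : Fin k → Fin (d+1), pInit d ps (Fin.last d) *
              (if c (Nlast d k z + (if (Fin.last d).1 = d then 1 else 0)) then
                Φ (α * Wf d ps η₁ k (Fin.last d) z) (β * Wf d ps η₂ k (Fin.last d) z) else 0))
            = ps * ∑ j ∈ Finset.range (k+1), wB ps true k (fun i => c (i+1)) j *
                ∑ u : Fin j → Fin d, Φ (α * ∏ s, η₁ (u s)) (β * ∏ s, η₂ (u s)) := by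
          rw [← Finset.mul_sum, pInit_last]
          congr 1
          have hz : ∀ z : Fin k → Fin (d+1),
              (if c (Nlast d k z + (if (Fin.last d).1 = d then 1 else 0)) then
                Φ (α * Wf d ps η₁ k (Fin.last d) z) (β * Wf d ps η₂ k (Fin.last d) z) else 0)
              = (if (fun i => c (i+1)) (Nlast d k z) then
                Φ (α * Wf d ps η₁ k (Fin.last d) z) (β * Wf d ps η₂ k (Fin.last d) z) else 0) := by
            intro z; rw [if_pos (Fin.val_last d)]
          simp only [hz]
          rw [ih (Fin.last d) (fun i => c (i+1)) α β hα hβ,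
            show decide ((Fin.last d : Fin (d+1)).1 = d) = true from decide_eq_true (Fin.val_last d)]
        simp only [hcast2]
        rw [hlast2, Finset.sum_const, Finset.card_univ, Fintype.card_fin]
        rw [nsmul_eq_mul]
        have hdd : (d : ℝ) ≠ 0 := by
          exact_mod_cast Nat.pos_iff_ne_zero.mp hd0
        rw [show (d : ℝ) * ((1 - ps) / d * ∑ j ∈ Finset.range (k+1), wB ps false k c j *
                ∑ u : Fin j → Fin d, Φ (α * ∏ s, η₁ (u s)) (β * ∏ s, η₂ (u s)))
            = (1 - ps) * ∑ j ∈ Finset.range (k+1), wB ps false k c j *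
                ∑ u : Fin j → Fin d, Φ (α * ∏ s, η₁ (u s)) (β * ∏ s, η₂ (u s)) by
          field_simp]
        rw [Finset.sum_range_succ (fun j => wB ps false (k+1) c j *
          ∑ u : Fin j → Fin d, Φ (α * ∏ s, η₁ (u s)) (β * ∏ s, η₂ (u s))) (k+1)]
        rw [(wB_vanish ps (k+1) c (k+1)).2 le_rfl (by omega), zero_mul, add_zero]
        rw [Finset.mul_sum, Finset.mul_sum, ← Finset.sum_add_distrib]
        apply Finset.sum_congr rfl
        intro j _
        show (1 - ps) * (wB ps false k c j * _) + ps * (wB ps true k (fun i => c (i+1)) j * _)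
          = ((1 - ps) * wB ps false k c j + ps * wB ps true k (fun i => c (i+1)) j) * _
        ring

lemma sum_prod_one (d : ℕ) (η : Fin d → ℝ) (hη : ∑ i, η i = 1) :
    ∀ j : ℕ, (∑ u : Fin j → Fin d, ∏ s, η (u s)) = 1 := by
  intro j
  induction j with
  | zero => simp
  | succ j ih =>
      rw [sum_pi_succ (k := j) (fun u => ∏ s, η (u s))]
      have h1 : ∀ (b : Fin d) (z : Fin j → Fin d),
          (∏ s, η (Fin.cons (α := fun _ => Fin d) b z s)) = η b * ∏ s, η (z s) := by
        intro b z
        rw [Fin.prod_univ_succ]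
        simp only [Fin.cons_zero, Fin.cons_succ]
      simp only [h1]
      have h2 : ∀ b : Fin d, (∑ z : Fin j → Fin d, η b * ∏ s, η (z s)) = η b := by
        intro b; rw [← Finset.mul_sum, ih, mul_one]
      simp only [h2]
      exact hη

def Cj (d : ℕ) (η₁ η₂ : Fin d → ℝ) (j : ℕ) : ℝ :=
  ∑ u : Fin j → Fin d, |(∏ s, η₁ (u s)) - ∏ s, η₂ (u s)|

lemma Cj_nonneg (d : ℕ) (η₁ η₂ : Fin d → ℝ) (j : ℕ) : 0 ≤ Cj d η₁ η₂ j :=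
  Finset.sum_nonneg (fun u _ => abs_nonneg _)

lemma Cj_mono (d : ℕ) (η₁ η₂ : Fin d → ℝ) (hs1 : ∑ i, η₁ i = 1) (hs2 : ∑ i, η₂ i = 1) :
    Monotone (Cj d η₁ η₂) := by
  apply monotone_nat_of_le_succ
  intro j
  unfold Cj
  rw [sum_pi_succ (k := j) (fun u => |(∏ s, η₁ (u s)) - ∏ s, η₂ (u s)|)]
  have hcons : ∀ (b : Fin d) (z : Fin j → Fin d),
      |(∏ s, η₁ (Fin.cons (α := fun _ => Fin d) b z s)) - ∏ s, η₂ (Fin.cons (α := fun _ => Fin d) b z s)|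
      = |η₁ b * ∏ s, η₁ (z s) - η₂ b * ∏ s, η₂ (z s)| := by
    intro b z
    rw [Fin.prod_univ_succ, Fin.prod_univ_succ]
    simp only [Fin.cons_zero, Fin.cons_succ]
  simp only [hcons]
  rw [Finset.sum_comm]
  apply Finset.sum_le_sum
  intro u _
  calc |(∏ s, η₁ (u s)) - ∏ s, η₂ (u s)|
      = |∑ b : Fin d, (η₁ b * ∏ s, η₁ (u s) - η₂ b * ∏ s, η₂ (u s))| := by
        rw [Finset.sum_sub_distrib, ← Finset.sum_mul, ← Finset.sum_mul, hs1, hs2, one_mul, one_mul]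
    _ ≤ ∑ b : Fin d, |η₁ b * ∏ s, η₁ (u s) - η₂ b * ∏ s, η₂ (u s)| :=
        Finset.abs_sum_le_sum_abs _ _

lemma exists_traj (d : ℕ) (ps : ℝ) (hps : 0 < ps) (hps1 : ps < 1)
    (η : Fin d → ℝ) (i0 : Fin d) (hi0 : 0 < η i0) :
    ∀ k : ℕ,
      (∀ (n : ℕ) (a : Fin (d+1)), ¬ (a.1 = d) → 2*n ≤ k+1 →
        ∃ y : Fin k → Fin (d+1), Nlast d k y = n ∧ 0 < Wf d ps η k a y) ∧
      (∀ (n : ℕ) (a : Fin (d+1)), a.1 = d → 2*n ≤ k →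
        ∃ y : Fin k → Fin (d+1), Nlast d k y = n ∧ 0 < Wf d ps η k a y) := by
  have hd0 : 0 < d := by have := i0.2; omega
  have hcast_ne : ¬ ((i0.castSucc : Fin (d+1)).1 = d) := by
    have := i0.2; simp only [Fin.coe_castSucc]; omega
  intro k
  induction k with
  | zero =>
      constructor
      · intro n a ha hn
        have hn0 : n = 0 := by omega
        subst hn0
        exact ⟨Fin.elim0, by simp [Nlast], by simp [Wf]⟩
      · intro n a ha hn
        have hn0 : n = 0 := by omega
        subst hn0
        exact ⟨Fin.elim0, by simp [Nlast], by simp [Wf]⟩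
  | succ k ih =>
      constructor
      · intro n a ha hn
        match n with
        | 0 =>
            obtain ⟨y, hy1, hy2⟩ := ih.1 0 i0.castSucc hcast_ne (by omega)
            refine ⟨Fin.cons i0.castSucc y, ?_, ?_⟩
            · rw [Nlast_cons, hy1, if_neg hcast_ne]
            · rw [Wf_cons, MG_nonlast d ps η a _ ha, pInit_cast]
              have : (0:ℝ) < (1 - ps) / d := by
                apply div_pos (by linarith) (by exact_mod_cast hd0)
              exact mul_pos this hy2
        | n+1 =>
            obtain ⟨y, hy1, hy2⟩ := ih.2 n (Fin.last d) (Fin.val_last d) (by omega)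
            refine ⟨Fin.cons (Fin.last d) y, ?_, ?_⟩
            · rw [Nlast_cons, hy1, if_pos (Fin.val_last d)]
            · rw [Wf_cons, MG_nonlast d ps η a _ ha, pInit_last]
              exact mul_pos hps hy2
      · intro n a ha hn
        obtain ⟨y, hy1, hy2⟩ := ih.1 n i0.castSucc hcast_ne (by omega)
        refine ⟨Fin.cons i0.castSucc y, ?_, ?_⟩
        · rw [Nlast_cons, hy1, if_neg hcast_ne]
          omega
        · rw [Wf_cons, MG_last_cast d ps η a i0 ha]
          exact mul_pos hi0 hy2


/-- Conditioning on `N_{d+1} ≤ n` is controlled by conditioning on `N_{d+1} = n`: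
the TV distance between the conditional trajectory laws given `N_{d+1} ≤ n` is at
most that given `N_{d+1} = n`. -/
theorem tv_cond_le_of_cond_eq
    (d m : ℕ) (hd : 2 ≤ d) (ps : ℝ) (hps : 0 < ps) (hps2 : ps ≤ 1 / (2 * ((d : ℝ) + 1)))
    (η₁ η₂ : Fin d → ℝ) (h1 : IsDist η₁) (h2 : IsDist η₂)
    (n : ℕ) (hn : 2 * n ≤ m + 1) :
    tvDist (condP (m := m) ps η₁ (fun x => Nlast d m x ≤ n))
        (condP (m := m) ps η₂ (fun x => Nlast d m x ≤ n)) ≤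
      tvDist (condP (m := m) ps η₁ (fun x => Nlast d m x = n))
        (condP (m := m) ps η₂ (fun x => Nlast d m x = n)) := by
  have hd0 : 0 < d := by omega
  have hdR : (0:ℝ) < d := by exact_mod_cast hd0
  have hps1 : ps < 1 := by
    have h6 : (1:ℝ) / (2 * ((d : ℝ) + 1)) < 1 := by
      rw [div_lt_one (by linarith)]
      linarith
    linarith
  set a0 : Fin (d+1) := ⟨0, Nat.succ_pos d⟩ with ha0def
  have ha0 : ¬ ((a0 : Fin (d+1)).1 = d) := by simp [ha0def]; omega
  -- master identity
  have key : ∀ (Φ : ℝ → ℝ → ℝ), (∀ (l x y : ℝ), 0 ≤ l → Φ (l * x) (l * y) = l * Φ x y) →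
      ∀ (c : ℕ → Prop),
      (∑ x : Fin m → Fin (d+1), if c (Nlast d m x) then
          Φ (trajP (MG d ps η₁) (pInit d ps) x) (trajP (MG d ps η₂) (pInit d ps) x) else 0)
      = ∑ j ∈ Finset.range (m+1), wB ps false m c j *
          ∑ u : Fin j → Fin d, Φ (∏ s, η₁ (u s)) (∏ s, η₂ (u s)) := by
    intro Φ hΦ c
    have h := main_ind d hd0 ps hps.le hps1.le η₁ η₂ h1.1 h2.1 Φ hΦ m a0 c 1 1
      zero_le_one zero_le_one
    simp only [one_mul] at h
    rw [show decide ((a0 : Fin (d+1)).1 = d) = false from decide_eq_false ha0] at h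
    rw [← h]
    apply Finset.sum_congr rfl
    intro x _
    rw [trajP_eq d m hd0 ps η₁ x, trajP_eq d m hd0 ps η₂ x]
  have hZ1 : ∀ (c : ℕ → Prop),
      (∑ x : Fin m → Fin (d+1), if c (Nlast d m x) then
          trajP (MG d ps η₁) (pInit d ps) x else 0)
      = ∑ j ∈ Finset.range (m+1), wB ps false m c j := by
    intro c
    have h := key (fun x _ => x) (fun l x y hl => rfl) c
    rw [h]
    apply Finset.sum_congr rfl
    intro j _
    rw [sum_prod_one d η₁ h1.2 j, mul_one]
  have hZ2 : ∀ (c : ℕ → Prop),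
      (∑ x : Fin m → Fin (d+1), if c (Nlast d m x) then
          trajP (MG d ps η₂) (pInit d ps) x else 0)
      = ∑ j ∈ Finset.range (m+1), wB ps false m c j := by
    intro c
    have h := key (fun _ y => y) (fun l x y hl => rfl) c
    rw [h]
    apply Finset.sum_congr rfl
    intro j _
    rw [sum_prod_one d η₂ h2.2 j, mul_one]
  have hDD : ∀ (c : ℕ → Prop),
      (∑ x : Fin m → Fin (d+1), if c (Nlast d m x) then
          |trajP (MG d ps η₁) (pInit d ps) x - trajP (MG d ps η₂) (pInit d ps) x| else 0)
      = ∑ j ∈ Finset.range (m+1), wB ps false m c j * Cj d η₁ η₂ j := by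
    intro c
    have h := key (fun x y => |x - y|)
      (fun l x y hl => by
        show |l * x - l * y| = l * |x - y|
        rw [← mul_sub, abs_mul, abs_of_nonneg hl]) c
    rw [h]
    rfl
  -- tv formula
  have main : ∀ (c : ℕ → Prop), 0 < (∑ j ∈ Finset.range (m+1), wB ps false m c j) →
      tvDist (condP (m := m) ps η₁ (fun x => c (Nlast d m x)))
          (condP (m := m) ps η₂ (fun x => c (Nlast d m x)))
      = (∑ j ∈ Finset.range (m+1), wB ps false m c j * Cj d η₁ η₂ j) /
          (2 * ∑ j ∈ Finset.range (m+1), wB ps false m c j) := by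
    intro c hZc
    simp only [tvDist, condP]
    rw [hZ1 c, hZ2 c]
    have habs : ∀ x : Fin m → Fin (d+1),
        |(if c (Nlast d m x) then trajP (MG d ps η₁) (pInit d ps) x else 0) /
            (∑ j ∈ Finset.range (m+1), wB ps false m c j)
          - (if c (Nlast d m x) then trajP (MG d ps η₂) (pInit d ps) x else 0) /
            (∑ j ∈ Finset.range (m+1), wB ps false m c j)|
        = (if c (Nlast d m x) then
            |trajP (MG d ps η₁) (pInit d ps) x - trajP (MG d ps η₂) (pInit d ps) x| else 0) /
            (∑ j ∈ Finset.range (m+1), wB ps false m c j) := by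
      intro x
      rw [div_sub_div_same, abs_div, abs_of_pos hZc]
      congr 1
      split_ifs
      · rfl
      · simp
    simp only [habs]
    rw [← Finset.sum_div, hDD c]
    ring
  -- positivity
  obtain ⟨i0, hi0⟩ : ∃ i, 0 < η₁ i := by
    by_contra hcon
    push_neg at hcon
    have hle : (∑ i, η₁ i) ≤ 0 := Finset.sum_nonpos (fun i _ => hcon i)
    rw [h1.2] at hle
    linarith
  obtain ⟨y0, hy0, hy0pos⟩ := (exists_traj d ps hps hps1 η₁ i0 hi0 m).1 n a0 ha0 hn
  have htraj_nonneg : ∀ x : Fin m → Fin (d+1), 0 ≤ trajP (MG d ps η₁) (pInit d ps) x := by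
    intro x
    rw [trajP_eq d m hd0 ps η₁ x]
    exact Wf_nonneg d ps η₁ hps.le hps1.le h1.1 m a0 x
  have hZn_pos : 0 < ∑ j ∈ Finset.range (m+1), wB ps false m (fun i => i = n) j := by
    rw [← hZ1 (fun i => i = n)]
    apply Finset.sum_pos'
    · intro x _
      split_ifs
      · exact htraj_nonneg x
      · exact le_rfl
    · refine ⟨y0, Finset.mem_univ _, ?_⟩
      rw [if_pos hy0, trajP_eq d m hd0 ps η₁ y0]
      exact hy0pos
  have hZle_pos : 0 < ∑ j ∈ Finset.range (m+1), wB ps false m (fun i => i ≤ n) j := by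
    rw [← hZ1 (fun i => i ≤ n)]
    apply Finset.sum_pos'
    · intro x _
      split_ifs
      · exact htraj_nonneg x
      · exact le_rfl
    · refine ⟨y0, Finset.mem_univ _, ?_⟩
      rw [if_pos (le_of_eq hy0), trajP_eq d m hd0 ps η₁ y0]
      exact hy0pos
  have e1 := main (fun i => i ≤ n) hZle_pos
  have e2 := main (fun i => i = n) hZn_pos
  rw [show (fun x : Fin m → Fin (d+1) => Nlast d m x ≤ n)
      = (fun x => (fun i => i ≤ n) (Nlast d m x)) from rfl,
    show (fun x : Fin m → Fin (d+1) => Nlast d m x = n)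
      = (fun x => (fun i => i = n) (Nlast d m x)) from rfl, e1, e2]
  rw [div_le_div_iff₀ (by linarith) (by linarith)]
  -- the weight decomposition inequality
  have swap : ∀ (G : ℕ → ℝ),
      (∑ j ∈ Finset.range (m+1), wB ps false m (fun i => i ≤ n) j * G j)
      = ∑ r ∈ Finset.range (m+1), (if r ≤ n then (1:ℝ) else 0) *
          ∑ j ∈ Finset.range (m+1), wB ps false m (fun i => i = r) j * G j := by
    intro G
    calc (∑ j ∈ Finset.range (m+1), wB ps false m (fun i => i ≤ n) j * G j)
        = ∑ j ∈ Finset.range (m+1), ∑ r ∈ Finset.range (m+1),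
            ((if r ≤ n then (1:ℝ) else 0) * wB ps false m (fun i => i = r) j) * G j := by
          apply Finset.sum_congr rfl
          intro j _
          rw [wB_decomp ps m false (fun i => i ≤ n) j, Finset.sum_mul]
          apply Finset.sum_congr rfl
          intro r _
          by_cases h : r ≤ n <;> simp [h]
      _ = _ := by
          rw [Finset.sum_comm]
          apply Finset.sum_congr rfl
          intro r _
          rw [Finset.mul_sum]
          apply Finset.sum_congr rfl
          intro j _
          ring
  have swap1 : (∑ j ∈ Finset.range (m+1), wB ps false m (fun i => i ≤ n) j)
      = ∑ r ∈ Finset.range (m+1), (if r ≤ n then (1:ℝ) else 0) *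
          ∑ j ∈ Finset.range (m+1), wB ps false m (fun i => i = r) j := by
    have h := swap (fun _ => 1)
    simpa using h
  have hZr_nonneg : ∀ r : ℕ, 0 ≤ ∑ j ∈ Finset.range (m+1), wB ps false m (fun i => i = r) j :=
    fun r => Finset.sum_nonneg (fun j _ => wB_nonneg ps hps.le hps1.le m false _ j)
  have hper : ∀ r, r ≤ n →
      (∑ j ∈ Finset.range (m+1), wB ps false m (fun i => i = r) j * Cj d η₁ η₂ j) *
        (∑ j ∈ Finset.range (m+1), wB ps false m (fun i => i = n) j)
      ≤ (∑ j ∈ Finset.range (m+1), wB ps false m (fun i => i = n) j * Cj d η₁ η₂ j) *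
        (∑ j ∈ Finset.range (m+1), wB ps false m (fun i => i = r) j) := by
    intro r hr
    rcases eq_or_lt_of_le hr with hrn | hrn
    · subst hrn; exact le_rfl
    · have hDr : (∑ j ∈ Finset.range (m+1), wB ps false m (fun i => i = r) j * Cj d η₁ η₂ j)
          ≤ (∑ j ∈ Finset.range (m+1), wB ps false m (fun i => i = r) j) * Cj d η₁ η₂ (n-1) := by
        rw [Finset.sum_mul]
        apply Finset.sum_le_sum
        intro j _
        by_cases hw : wB ps false m (fun i => i = r) j = 0
        · rw [hw]; simp
        · obtain ⟨i, hir, hji⟩ := wB_le ps m false (fun i => i = r) j hw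
          simp only [if_neg Bool.false_ne_true] at hji
          have hj : j ≤ n - 1 := by omega
          exact mul_le_mul_of_nonneg_left (Cj_mono d η₁ η₂ h1.2 h2.2 hj)
            (wB_nonneg ps hps.le hps1.le m false _ j)
      have hDn : (∑ j ∈ Finset.range (m+1), wB ps false m (fun i => i = n) j) * Cj d η₁ η₂ (n-1)
          ≤ (∑ j ∈ Finset.range (m+1), wB ps false m (fun i => i = n) j * Cj d η₁ η₂ j) := by
        rw [Finset.sum_mul]
        apply Finset.sum_le_sum
        intro j _
        by_cases hw : wB ps false m (fun i => i = n) j = 0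
        · rw [hw]; simp
        · obtain ⟨i, hin, hji⟩ := wB_ge ps m false (fun i => i = n) j hw
          simp only [if_neg Bool.false_ne_true] at hji
          have hj : n - 1 ≤ j := by omega
          exact mul_le_mul_of_nonneg_left (Cj_mono d η₁ η₂ h1.2 h2.2 hj)
            (wB_nonneg ps hps.le hps1.le m false _ j)
      calc (∑ j ∈ Finset.range (m+1), wB ps false m (fun i => i = r) j * Cj d η₁ η₂ j) *
            (∑ j ∈ Finset.range (m+1), wB ps false m (fun i => i = n) j)
          ≤ ((∑ j ∈ Finset.range (m+1), wB ps false m (fun i => i = r) j) * Cj d η₁ η₂ (n-1)) *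
            (∑ j ∈ Finset.range (m+1), wB ps false m (fun i => i = n) j) :=
            mul_le_mul_of_nonneg_right hDr (hZr_nonneg n)
        _ = ((∑ j ∈ Finset.range (m+1), wB ps false m (fun i => i = n) j) * Cj d η₁ η₂ (n-1)) *
            (∑ j ∈ Finset.range (m+1), wB ps false m (fun i => i = r) j) := by ring
        _ ≤ (∑ j ∈ Finset.range (m+1), wB ps false m (fun i => i = n) j * Cj d η₁ η₂ j) *
            (∑ j ∈ Finset.range (m+1), wB ps false m (fun i => i = r) j) :=
            mul_le_mul_of_nonneg_right hDn (hZr_nonneg r)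
  have hfinal : (∑ j ∈ Finset.range (m+1), wB ps false m (fun i => i ≤ n) j * Cj d η₁ η₂ j) *
      (∑ j ∈ Finset.range (m+1), wB ps false m (fun i => i = n) j)
      ≤ (∑ j ∈ Finset.range (m+1), wB ps false m (fun i => i = n) j * Cj d η₁ η₂ j) *
        (∑ j ∈ Finset.range (m+1), wB ps false m (fun i => i ≤ n) j) := by
    rw [swap (Cj d η₁ η₂), swap1, Finset.sum_mul, Finset.mul_sum]
    apply Finset.sum_le_sum
    intro r _
    by_cases hr : r ≤ n
    · rw [if_pos hr, one_mul, one_mul]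
      exact hper r hr
    · rw [if_neg hr]
      simp
  nlinarith [hfinal]

end
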